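/- For pairwise disjoint infinite sets (X_i)_{i∈I} with union X, let G be the group of permutations g of X such that the index of xg differs from the index of x for only finitely many x∈X. For a reflexive binary relation ρ on I, let S_ρ be the set of g∈G such that for all x, (ι(x), ι(xg))∈ρ, where ι(x) is the index of the set containing x. Then for reflexive relations ρ, σ on I, the elementwise product S_ρ · S_σ equals S_{ρ∘σ}, where ρ∘σ is the composite relation {(i,k) : ∃j, (i,j)∈ρ ∧ (j,k)∈σ}. -/

import Mathlib

open Pointwise

/-- The group of permutations of `X` (written as acting on the right, i.e. as elements of the
opposite of `Equiv.Perm X`, so that products compose left-to-right) that move only finitely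
many elements of `X` between the fibers of `ι : X → I`. -/
def restrictedPermGroup {X I : Type*} (ι : X → I) : Set (Equiv.Perm X)ᵐᵒᵖ :=
  {g | {x | ι (g.unop x) ≠ ι x}.Finite}

/-- For a binary relation `ρ` on `I`, the set `S_ρ` of permutations in the restricted
permutation group which move an element of the fiber over `i` into the fiber over `j`
only when `ρ i j` holds. -/
def relSet {X I : Type*} (ι : X → I) (ρ : I → I → Prop) : Set (Equiv.Perm X)ᵐᵒᵖ :=
  {g | g ∈ restrictedPermGroup ι ∧ ∀ x, ρ (ι x) (ι (g.unop x))}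

lemma mk_eq_mk_of_diff_finite {X : Type*} {s t : Set X} (h1 : (s \ t).Finite)
    (h2 : (t \ s).Finite) (ht : t.Infinite) : Cardinal.mk s = Cardinal.mk t := by
  have hs : s.Infinite := (ht.diff h2).mono (fun x hx => by
    rcases hx with ⟨hxt, hxn⟩
    by_contra hxs
    exact hxn ⟨hxt, hxs⟩)
  have key : ∀ {a b : Set X}, (a \ b).Finite → b.Infinite →
      Cardinal.mk a ≤ Cardinal.mk b := by
    intro a b hab hb
    calc Cardinal.mk a ≤ Cardinal.mk ((b ∪ (a \ b) : Set X)) :=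
          Cardinal.mk_le_mk_of_subset (fun x hx => by
            by_cases h : x ∈ b
            · exact Or.inl h
            · exact Or.inr ⟨hx, h⟩)
      _ ≤ Cardinal.mk b + Cardinal.mk (a \ b : Set X) := Cardinal.mk_union_le _ _
      _ = Cardinal.mk b := by
          haveI := hb.to_subtype
          exact Cardinal.add_eq_left (Cardinal.aleph0_le_mk _)
            (hab.lt_aleph0.le.trans (Cardinal.aleph0_le_mk _))
  exact le_antisymm (key h1 ht) (key h2 hs)

lemma exists_perm_of_fiber {X I : Type*} (ι κ : X → I)
    (hfib : ∀ i, {x | ι x = i}.Infinite)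
    (hfin : {x | κ x ≠ ι x}.Finite) :
    ∃ g : Equiv.Perm X, ∀ x, ι (g x) = κ x := by
  have key : ∀ i, Nonempty ({x // κ x = i} ≃ {x // ι x = i}) := by
    intro i
    rw [← Cardinal.eq]
    have h1 : ({x | κ x = i} \ {x | ι x = i}).Finite :=
      hfin.subset (fun x hx => by
        simp only [Set.mem_diff, Set.mem_setOf_eq] at hx
        simp only [Set.mem_setOf_eq]
        rw [hx.1]
        exact fun h => hx.2 h.symm)
    have h2 : ({x | ι x = i} \ {x | κ x = i}).Finite :=
      hfin.subset (fun x hx => by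
        simp only [Set.mem_diff, Set.mem_setOf_eq] at hx
        simp only [Set.mem_setOf_eq]
        rw [← hx.1] at hx
        exact hx.2)
    exact mk_eq_mk_of_diff_finite h1 h2 (hfib i)
  have e : ∀ i, {x // κ x = i} ≃ {x // ι x = i} := fun i => (key i).some
  refine ⟨(Equiv.sigmaFiberEquiv κ).symm.trans
    ((Equiv.sigmaCongrRight e).trans (Equiv.sigmaFiberEquiv ι)), ?_⟩
  intro x
  exact (e (κ x) ⟨x, rfl⟩).2

/-- If all fibers of `ι` are infinite and `ρ`, `σ` are reflexive relations on `I`, then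
`S_ρ · S_σ = S_{ρ∘σ}`. -/
theorem relSet_mul_relSet {X I : Type*} (ι : X → I)
    (hfib : ∀ i : I, {x | ι x = i}.Infinite)
    (ρ σ : I → I → Prop) (hρ : Reflexive ρ) (hσ : Reflexive σ) :
    relSet ι ρ * relSet ι σ = relSet ι (Relation.Comp ρ σ) := by
  ext f
  simp only [Set.mem_mul]
  constructor
  · rintro ⟨g, ⟨hgfin, hgρ⟩, h, ⟨hhfin, hhσ⟩, rfl⟩
    constructor
    · -- finiteness
      refine Set.Finite.subset (hgfin.union (hhfin.preimage g.unop.injective.injOn)) ?_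
      intro x hx
      simp only [MulOpposite.unop_mul, Equiv.Perm.coe_mul, Function.comp_apply,
        Set.mem_setOf_eq] at hx
      by_cases h1 : ι (g.unop x) = ι x
      · exact Or.inr (by simp only [Set.mem_preimage, Set.mem_setOf_eq]; rw [h1]; exact hx)
      · exact Or.inl h1
    · intro x
      refine ⟨ι (g.unop x), hgρ x, ?_⟩
      simpa using hhσ (g.unop x)
  · rintro ⟨hffin, hf⟩
    have hchoice : ∀ x, ∃ j, ρ (ι x) j ∧ σ j (ι (f.unop x)) ∧ (ι (f.unop x) = ι x → j = ι x) := by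
      intro x
      by_cases hmem : ι (f.unop x) = ι x
      · exact ⟨ι x, hρ _, by rw [hmem]; exact hσ _, fun _ => rfl⟩
      · obtain ⟨j, hj1, hj2⟩ := hf x
        exact ⟨j, hj1, hj2, fun h => absurd h hmem⟩
    choose κ hκρ hκσ hκeq using hchoice
    have hκfin : {x | κ x ≠ ι x}.Finite :=
      hffin.subset (fun x hx heq => hx (hκeq x heq))
    obtain ⟨g', hg'⟩ := exists_perm_of_fiber ι κ hfib hκfin
    refine ⟨MulOpposite.op g', ⟨?_, ?_⟩, MulOpposite.op (f.unop * g'⁻¹), ⟨?_, ?_⟩, ?_⟩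
    · -- g finiteness
      simp only [restrictedPermGroup, Set.mem_setOf_eq, MulOpposite.unop_op, hg']
      exact hκfin
    · intro x
      simp only [MulOpposite.unop_op, hg']
      exact hκρ x
    · -- h finiteness
      refine Set.Finite.subset (hffin.image g') ?_
      intro z hz
      simp only [Set.mem_setOf_eq, MulOpposite.unop_op, Equiv.Perm.mul_apply] at hz
      set u := g'⁻¹ z with hu
      have hzu : z = g' u := ((show g' (g'⁻¹ z) = z from Equiv.apply_symm_apply g' z)).symm
      by_cases hF : ι (f.unop u) = ι u
      · exfalso
        have : κ u = ι u := hκeq u hF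
        rw [hzu, hg', this, hF] at hz
        exact hz rfl
      · exact ⟨u, hF, hzu.symm⟩
    · intro z
      simp only [MulOpposite.unop_op, Equiv.Perm.mul_apply]
      have h1 : ι z = κ (g'⁻¹ z) := by
        conv_lhs => rw [← (show g' (g'⁻¹ z) = z from Equiv.apply_symm_apply g' z)]
        rw [hg']
      rw [h1]
      exact hκσ _
    · simp [← MulOpposite.op_mul, mul_assoc]
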